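/- arXiv:2104.06610 — 4 statements merged into one kernel-verified Lean document; each statement's English description precedes it below -/
import Mathlib

section
/- Assume R₀ := λK/μ > 1 and θ > θ₁, where θ₁ := d + λad(r + λK)/(r(λK − μ)). Define Y* := ad/(θ − d), X* := K − (1 + λK/r)·Y*, and Z* := (a + Y*)(λX* − μ)/m. Then Y* > 0, λX* > μ (hence X* > 0), and Z* > 0; thus the interior fixed point E* = (X*, Y*, Z*) exists with all components positive. -/
/-- Existence of the interior fixed point `E* = (X*, Y*, Z*)`: if
`R₀ = λK/μ > 1` and `θ > θ₁ = d + λad(r + λK)/(r(λK − μ))`, then with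
`Y* = ad/(θ − d)`, `X* = K − (1 + λK/r)Y*`, `Z* = (a + Y*)(λX* − μ)/m`
one has `Y* > 0`, `λX* > μ` (hence `X* > 0`) and `Z* > 0`. -/
theorem interior_fixed_point_existence
    (r K lam m mu a th d : ℝ)
    (hr : 0 < r) (hK : 0 < K) (hlam : 0 < lam) (hm : 0 < m) (hmu : 0 < mu)
    (ha : 0 < a) (hth : 0 < th) (hd : 0 < d)
    (hR0 : 1 < lam * K / mu)
    (hθ : th > d + lam * a * d * (r + lam * K) / (r * (lam * K - mu))) :
    0 < a * d / (th - d) ∧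
    mu < lam * (K - (1 + lam * K / r) * (a * d / (th - d))) ∧
    0 < K - (1 + lam * K / r) * (a * d / (th - d)) ∧
    0 < (a + a * d / (th - d)) *
        (lam * (K - (1 + lam * K / r) * (a * d / (th - d))) - mu) / m := by
  have hmuK : mu < lam * K := by
    have := (one_lt_div hmu).mp hR0
    linarith
  have hden : 0 < r * (lam * K - mu) := mul_pos hr (by linarith)
  have hQ : 0 < lam * a * d * (r + lam * K) / (r * (lam * K - mu)) := by positivity
  have hs : 0 < th - d := by linarith
  have hY : 0 < a * d / (th - d) := by positivity
  have hs' : lam * a * d * (r + lam * K) < (th - d) * (r * (lam * K - mu)) := by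
    have := (div_lt_iff₀ hden).mp (by linarith : lam * a * d * (r + lam * K) / (r * (lam * K - mu)) < th - d)
    linarith
  have hkey : lam * (K - (1 + lam * K / r) * (a * d / (th - d))) - mu =
      ((th - d) * (r * (lam * K - mu)) - lam * a * d * (r + lam * K)) / (r * (th - d)) := by
    field_simp
    ring
  have hpos : 0 < lam * (K - (1 + lam * K / r) * (a * d / (th - d))) - mu := by
    rw [hkey]
    have : 0 < (th - d) * (r * (lam * K - mu)) - lam * a * d * (r + lam * K) := by linarith
    positivity
  refine ⟨hY, by linarith, ?_, ?_⟩
  · nlinarith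
  · have h1 : 0 < a + a * d / (th - d) := by positivity
    have := mul_pos h1 hpos
    positivity
end

section
/- Suppose λK < μ (i.e., R₀ := λK/μ < 1) and s < min{s₂, s₃, s₄}, where s₂ := (2αΓ(α)/d)^{1/α}, s₃ := (2αΓ(α)/r)^{1/α}, and s₄ := (2αΓ(α)/(μ − λK))^{1/α}. Then the three eigenvalues ξ₁ = 1 − h·r, ξ₂ = 1 + h·(λK − μ), ξ₃ = 1 − h·d of the (upper-triangular) Jacobian matrix J(E₁) at the axial fixed point E₁ = (K, 0, 0) all satisfy |ξᵢ| < 1 (i = 1, 2, 3); hence E₁ is locally asymptotically stable. -/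
private lemma key_bound (α s c : ℝ) (hα0 : 0 < α) (hs : 0 < s) (hc : 0 < c)
    (hlt : s < (2 * α * Real.Gamma α / c) ^ (1 / α)) :
    s ^ α / (α * Real.Gamma α) * c < 2 := by
  have hΓ : 0 < Real.Gamma α := Real.Gamma_pos_of_pos hα0
  have hden : 0 < α * Real.Gamma α := mul_pos hα0 hΓ
  have hbase : 0 < 2 * α * Real.Gamma α / c := by positivity
  have h1 : s ^ α < ((2 * α * Real.Gamma α / c) ^ (1 / α)) ^ α :=
    Real.rpow_lt_rpow hs.le hlt hα0
  have h2 : ((2 * α * Real.Gamma α / c) ^ (1 / α)) ^ α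
      = 2 * α * Real.Gamma α / c := by
    rw [← Real.rpow_mul hbase.le, one_div, inv_mul_cancel₀ hα0.ne', Real.rpow_one]
  have h3 : s ^ α < 2 * α * Real.Gamma α / c := by
    calc s ^ α < ((2 * α * Real.Gamma α / c) ^ (1 / α)) ^ α :=
          Real.rpow_lt_rpow hs.le hlt hα0
      _ = 2 * α * Real.Gamma α / c := h2
  rw [div_mul_eq_mul_div, div_lt_iff₀ hden]
  calc s ^ α * c < (2 * α * Real.Gamma α / c) * c := by
        exact mul_lt_mul_of_pos_right h3 hc
    _ = 2 * (α * Real.Gamma α) := by field_simp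

/-- Local asymptotic stability of the axial fixed point `E₁ = (K,0,0)`:
if `λK < μ` (i.e. `R₀ < 1`) and `s < min{s₂, s₃, s₄}` where
`s₂ = (2αΓ(α)/d)^{1/α}`, `s₃ = (2αΓ(α)/r)^{1/α}`,
`s₄ = (2αΓ(α)/(μ − λK))^{1/α}`, then the three eigenvalues
`ξ₁ = 1 − hr`, `ξ₂ = 1 + h(λK − μ)`, `ξ₃ = 1 − hd` of the Jacobian `J(E₁)`
all satisfy `|ξᵢ| < 1`. -/
theorem E1_locally_asymptotically_stable
    (r K lam m mu a th d α s h : ℝ)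
    (hr : 0 < r) (hK : 0 < K) (hlam : 0 < lam) (hm : 0 < m) (hmu : 0 < mu)
    (ha : 0 < a) (hth : 0 < th) (hd : 0 < d)
    (hα0 : 0 < α) (hα1 : α ≤ 1) (hs : 0 < s)
    (hh : h = s ^ α / (α * Real.Gamma α))
    (hR0 : lam * K < mu)
    (hsb : s < min ((2 * α * Real.Gamma α / d) ^ (1 / α))
        (min ((2 * α * Real.Gamma α / r) ^ (1 / α))
          ((2 * α * Real.Gamma α / (mu - lam * K)) ^ (1 / α)))) :
    |1 - h * r| < 1 ∧ |1 + h * (lam * K - mu)| < 1 ∧ |1 - h * d| < 1 := by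
  have hΓ : 0 < Real.Gamma α := Real.Gamma_pos_of_pos hα0
  have hhpos : 0 < h := by rw [hh]; positivity
  have hsd := (lt_min_iff.mp hsb).1
  have hsr := (lt_min_iff.mp (lt_min_iff.mp hsb).2).1
  have hsmu := (lt_min_iff.mp (lt_min_iff.mp hsb).2).2
  have hmu' : 0 < mu - lam * K := by linarith
  have b1 : h * r < 2 := hh ▸ key_bound α s r hα0 hs hr hsr
  have b2 : h * (mu - lam * K) < 2 := hh ▸ key_bound α s (mu - lam * K) hα0 hs hmu' hsmu
  have b3 : h * d < 2 := hh ▸ key_bound α s d hα0 hs hd hsd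
  have p1 : 0 < h * r := mul_pos hhpos hr
  have p2 : 0 < h * (mu - lam * K) := mul_pos hhpos hmu'
  have p3 : 0 < h * d := mul_pos hhpos hd
  refine ⟨abs_lt.mpr ⟨by linarith, by linarith⟩,
    abs_lt.mpr ⟨by nlinarith, by nlinarith⟩,
    abs_lt.mpr ⟨by linarith, by linarith⟩⟩
end

section
/- Assume λK > μ. Define A := h·rμ/(λK) − 1 and B := h²·rμ(λK − μ)/(λK). If s₅ < s < s₇, where s₅ := (αΓ(α)/(λK − μ))^{1/α} and s₇ := (λK(αΓ(α))²/(μr(λK − μ)))^{1/(2α)} (equivalently, h·(λK − μ) > 1 and h²·rμ(λK − μ)/(λK) < 1), then both complex roots ξ of ξ² + Aξ + B = 0 satisfy |ξ| < 1. -/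
set_option maxHeartbeats 1000000 in
/-- Jury criterion for the quadratic factor at the planar fixed point `E₂`:
assume `λK > μ`, `A = hrμ/(λK) − 1`, `B = h²rμ(λK − μ)/(λK)` with
`h = s^α/(αΓ(α))`. If `s₅ < s < s₇` with `s₅ = (αΓ(α)/(λK − μ))^{1/α}` and
`s₇ = (λK(αΓ(α))²/(μr(λK − μ)))^{1/(2α)}`, then both complex roots of
`ξ² + Aξ + B = 0` satisfy `|ξ| < 1`. -/
theorem E2_quadratic_roots_in_unit_disk
    (r K lam mu α s h A B : ℝ)
    (hr : 0 < r) (hK : 0 < K) (hlam : 0 < lam) (hmu : 0 < mu)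
    (hα0 : 0 < α) (hα1 : α ≤ 1) (hs : 0 < s)
    (hh : h = s ^ α / (α * Real.Gamma α))
    (hR0 : mu < lam * K)
    (hA : A = h * r * mu / (lam * K) - 1)
    (hB : B = h ^ 2 * r * mu * (lam * K - mu) / (lam * K))
    (hs5 : (α * Real.Gamma α / (lam * K - mu)) ^ (1 / α) < s)
    (hs7 : s < (lam * K * (α * Real.Gamma α) ^ 2 / (mu * r * (lam * K - mu))) ^ (1 / (2 * α))) :
    ∀ ξ : ℂ, ξ ^ 2 + (A : ℂ) * ξ + (B : ℂ) = 0 → ‖ξ‖ < 1 := by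
  have hg : 0 < α * Real.Gamma α := mul_pos hα0 (Real.Gamma_pos_of_pos hα0)
  have hKl : 0 < lam * K := mul_pos hlam hK
  have hd : 0 < lam * K - mu := by linarith
  have hsα : 0 < s ^ α := Real.rpow_pos_of_pos hs α
  have hhp : 0 < h := by rw [hh]; positivity
  have hinv : (1 / α) * α = 1 := by field_simp
  -- key1 : h * (lam*K - mu) > 1
  have key1 : 1 < h * (lam * K - mu) := by
    have hb : 0 < α * Real.Gamma α / (lam * K - mu) := by positivity
    have := Real.rpow_lt_rpow (le_of_lt (Real.rpow_pos_of_pos hb (1/α))) hs5 hα0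
    rw [← Real.rpow_mul hb.le, hinv, Real.rpow_one] at this
    have h1 : α * Real.Gamma α / (lam * K - mu) < s ^ α := this
    rw [hh]
    rw [div_lt_iff₀ hd] at h1
    rw [div_mul_eq_mul_div, lt_div_iff₀ hg]
    linarith
  -- key2 : h^2 * (mu*r*(lam*K-mu)) < lam*K
  have key2 : h ^ 2 * (mu * r * (lam * K - mu)) < lam * K := by
    have hb : 0 < lam * K * (α * Real.Gamma α) ^ 2 / (mu * r * (lam * K - mu)) := by
      positivity
    have h2inv : (1 / (2*α)) * (2*α) = 1 := by field_simp
    have := Real.rpow_lt_rpow hs.le hs7 (by positivity : (0:ℝ) < 2*α)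
    rw [← Real.rpow_mul hb.le, h2inv, Real.rpow_one] at this
    have hsq : s ^ (2*α) = (s ^ α) ^ 2 := by
      rw [mul_comm, Real.rpow_mul hs.le]
      norm_num
    rw [hsq] at this
    rw [lt_div_iff₀ (by positivity : (0:ℝ) < mu * r * (lam * K - mu))] at this
    rw [hh]
    rw [div_pow, div_mul_eq_mul_div, div_lt_iff₀ (by positivity : (0:ℝ) < (α * Real.Gamma α)^2)]
    linarith
  have hB1 : B < 1 := by
    rw [hB, div_lt_one hKl]; nlinarith
  have hB0 : 0 < B := by rw [hB]; positivity
  -- hc := h*r*mu/(lam*K) < 1, since hc < hc * (h*(lam*K-mu)) = B < 1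
  have hAneg : -1 < A ∧ A < 0 := by
    constructor
    · rw [hA]
      have : 0 < h * r * mu / (lam * K) := by positivity
      linarith
    · rw [hA]
      have hc : h * r * mu / (lam * K) < 1 := by
        have hcB : h * r * mu / (lam * K) < B := by
          rw [hB, div_lt_div_iff₀ hKl hKl]
          nlinarith [mul_pos (mul_pos (mul_pos hhp hr) hmu) hKl, key1]
        linarith
      linarith
  intro ξ hξ
  obtain ⟨hA1, hA2⟩ := hAneg
  clear hh hA hB hs5 hs7 key1 key2 hsα hinv hg
  set x := ξ.re with hx
  set y := ξ.im with hy
  have hre : x ^ 2 - y ^ 2 + A * x + B = 0 := by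
    have := congrArg Complex.re hξ
    simpa [Complex.add_re, Complex.mul_re, pow_two] using this
  have him : y * (2 * x + A) = 0 := by
    have := congrArg Complex.im hξ
    simp [Complex.add_im, Complex.mul_im, pow_two] at this
    ring_nf
    ring_nf at this
    linarith
  have hnorm : x ^ 2 + y ^ 2 < 1 := by
    rcases mul_eq_zero.mp him with h0 | h0
    · -- real root
      have hx2 : x ^ 2 + A * x + B = 0 := by rw [h0] at hre; linarith [hre]
      have hlt : x < 1 := by
        by_contra hcon
        push_neg at hcon
        nlinarith [mul_nonneg (by linarith : (0:ℝ) ≤ x - 1) (by linarith : (0:ℝ) ≤ x + 1 + A)]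
      have hgt : -1 < x := by
        by_contra hcon
        push_neg at hcon
        nlinarith [mul_nonneg (by linarith : (0:ℝ) ≤ -(x + 1)) (by linarith : (0:ℝ) ≤ -(x + A - 1))]
      rw [h0]
      nlinarith
    · -- conjugate pair: x = -A/2, x^2+y^2 = B
      have hx0 : x = -A / 2 := by linarith
      have : x ^ 2 + y ^ 2 = B := by nlinarith [hre, hx0]
      linarith
  have habs : (‖ξ‖) ^ 2 = x ^ 2 + y ^ 2 := by
    rw [Complex.sq_norm, Complex.normSq_apply]; ring
  have hnn : 0 ≤ ‖ξ‖ := norm_nonneg ξ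
  set a := ‖ξ‖
  nlinarith [habs, hnn, hnorm]
end

section
/- Assume R₀ := λK/μ > 1 and d > d₁, where d₁ := θr(λK − μ)/(aλ(λK + r) + r(λK − μ)). If s₅ < s < min{s₆, s₇}, where s₅ := (αΓ(α)/(λK − μ))^{1/α}, s₆ := (2αΓ(α)/(d − d₁))^{1/α}, and s₇ := (λK(αΓ(α))²/(μr(λK − μ)))^{1/(2α)}, then all three eigenvalues of the matrix M = [[1 − h·rμ/(λK), −h·μ(r + λK)/(λK), 0], [h·r(λK − μ)/(λK + r), 0, −h·mr(λK − μ)/(aλ(λK + r) + r(λK − μ))], [0, 0, 1 + h·(d₁ − d)]] have modulus strictly less than 1; hence the planar fixed point E₂ is locally asymptotically stable. -/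
open Matrix Polynomial

lemma eval_charpoly3 (N : Matrix (Fin 3) (Fin 3) ℂ) (x : ℂ) :
    N.charpoly.eval x =
      (x - N 0 0) * ((x - N 1 1) * (x - N 2 2) - (- N 1 2) * (- N 2 1))
      - (- N 0 1) * ((- N 1 0) * (x - N 2 2) - (- N 1 2) * (- N 2 0))
      + (- N 0 2) * ((- N 1 0) * (- N 2 1) - (x - N 1 1) * (- N 2 0)) := by
  rw [Matrix.charpoly, Matrix.det_fin_three]
  simp [charmatrix_apply_eq, charmatrix_apply_ne]
  ring

lemma quad_root_abs_lt_one (A B : ℝ) (hB0 : 0 < B) (hB1 : B < 1)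
    (h1 : 0 < 1 + A + B) (h2 : 0 < 1 - A + B) (ξ : ℂ)
    (hξ : ξ ^ 2 + (A : ℂ) * ξ + (B : ℂ) = 0) : ‖ξ‖ < 1 := by
  set x := ξ.re with hx
  set y := ξ.im with hy
  have hre : x ^ 2 - y ^ 2 + A * x + B = 0 := by
    have := congrArg Complex.re hξ
    simp [Complex.add_re, Complex.mul_re, pow_two, Complex.mul_im] at this
    nlinarith [this]
  have him : y * (2 * x + A) = 0 := by
    have := congrArg Complex.im hξ
    simp [Complex.add_im, Complex.mul_im, pow_two, Complex.mul_re] at this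
    nlinarith [this]
  have habs : (‖ξ‖) ^ 2 = x ^ 2 + y ^ 2 := by
    rw [Complex.sq_norm, Complex.normSq_apply]; ring
  have hlt : (‖ξ‖) ^ 2 < 1 := by
    rcases mul_eq_zero.mp him with hy0 | hxA
    · rw [habs, hy0]
      have hq : x ^ 2 + A * x + B = 0 := by nlinarith [hre]
      have hx1 : x < 1 := by nlinarith [hq]
      have hx2 : -1 < x := by nlinarith [hq]
      nlinarith
    · have hxA' : x = -A / 2 := by linarith
      rw [habs]
      nlinarith [hre]
  nlinarith [norm_nonneg ξ, hlt]

set_option maxHeartbeats 1000000 in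
/-- Local asymptotic stability of the planar fixed point `E₂`: assume
`R₀ = λK/μ > 1` and `d > d₁ = θr(λK − μ)/(aλ(λK + r) + r(λK − μ))`. If
`s₅ < s < min{s₆, s₇}` with `s₅ = (αΓ(α)/(λK − μ))^{1/α}`,
`s₆ = (2αΓ(α)/(d − d₁))^{1/α}`,
`s₇ = (λK(αΓ(α))²/(μr(λK − μ)))^{1/(2α)}`, then all three (complex)
eigenvalues of the Jacobian matrix `M` at `E₂` have modulus strictly less
than `1`. -/
theorem E2_locally_asymptotically_stable
    (r K lam m mu a th d α s h d₁ : ℝ)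
    (hr : 0 < r) (hK : 0 < K) (hlam : 0 < lam) (hm : 0 < m) (hmu : 0 < mu)
    (ha : 0 < a) (hth : 0 < th) (hd : 0 < d)
    (hα0 : 0 < α) (hα1 : α ≤ 1) (hs : 0 < s)
    (hh : h = s ^ α / (α * Real.Gamma α))
    (hR0 : 1 < lam * K / mu)
    (hd₁ : d₁ = th * r * (lam * K - mu) / (a * lam * (lam * K + r) + r * (lam * K - mu)))
    (hdd₁ : d₁ < d)
    (hs5 : (α * Real.Gamma α / (lam * K - mu)) ^ (1 / α) < s)
    (hsb : s < min ((2 * α * Real.Gamma α / (d - d₁)) ^ (1 / α))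
        ((lam * K * (α * Real.Gamma α) ^ 2 / (mu * r * (lam * K - mu))) ^ (1 / (2 * α))))
    (M : Matrix (Fin 3) (Fin 3) ℝ)
    (hM : M = !![1 - h * r * mu / (lam * K), -(h * mu * (r + lam * K) / (lam * K)), 0;
                 h * r * (lam * K - mu) / (lam * K + r), 0,
                   -(h * m * r * (lam * K - mu) / (a * lam * (lam * K + r) + r * (lam * K - mu)));
                 0, 0, 1 + h * (d₁ - d)]) :
    ∀ ξ : ℂ, (M.map Complex.ofReal).charpoly.IsRoot ξ → ‖ξ‖ < 1 := by
  -- basic positivity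
  have hG : 0 < α * Real.Gamma α := mul_pos hα0 (Real.Gamma_pos_of_pos hα0)
  have hKmu : 0 < lam * K - mu := by
    have := (one_lt_div hmu).mp hR0; linarith
  have hlK : 0 < lam * K := mul_pos hlam hK
  have hsα : 0 < s ^ α := Real.rpow_pos_of_pos hs α
  have hhpos : 0 < h := by rw [hh]; positivity
  have hαne : α ≠ 0 := ne_of_gt hα0
  -- lower bound : 1 < h * (lam K - mu)
  have key1 : 1 < h * (lam * K - mu) := by
    have h5 : α * Real.Gamma α / (lam * K - mu) < s ^ α := by
      have := Real.rpow_lt_rpow (by positivity) hs5 hα0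
      rwa [one_div, Real.rpow_inv_rpow (by positivity) hαne] at this
    rw [hh]
    rw [div_lt_iff₀ hKmu] at h5
    rw [div_mul_eq_mul_div, lt_div_iff₀ hG]
    linarith
  -- upper bound from s₆ : h * (d - d₁) < 2
  have key2 : h * (d - d₁) < 2 := by
    have h6 : s ^ α < 2 * α * Real.Gamma α / (d - d₁) := by
      have hlt := lt_of_lt_of_le hsb (min_le_left _ _)
      have h2' := Real.rpow_lt_rpow hs.le hlt hα0
      have hpos : (0:ℝ) ≤ 2 * α * Real.Gamma α / (d - d₁) := by
        have : 0 < d - d₁ := by linarith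
        positivity
      rwa [one_div, Real.rpow_inv_rpow hpos hαne] at h2'
    rw [hh, div_mul_eq_mul_div, div_lt_iff₀ hG]
    rw [lt_div_iff₀ (by linarith : (0:ℝ) < d - d₁)] at h6
    linarith [h6]
  have hddpos : 0 < h * (d - d₁) := by
    have : 0 < d - d₁ := by linarith
    positivity
  -- upper bound from s₇ : h^2 * (mu*r*(lam K - mu)) < lam*K
  have key3 : h ^ 2 * (mu * r * (lam * K - mu)) < lam * K := by
    have h7 : (s ^ α) ^ 2 < lam * K * (α * Real.Gamma α) ^ 2 / (mu * r * (lam * K - mu)) := by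
      have hlt := lt_of_lt_of_le hsb (min_le_right _ _)
      have h2' := Real.rpow_lt_rpow hs.le hlt (by positivity : (0:ℝ) < 2 * α)
      rw [one_div, Real.rpow_inv_rpow (by positivity) (by positivity)] at h2'
      rwa [show (2:ℝ) * α = α * 2 by ring, Real.rpow_mul hs.le,
        Real.rpow_two] at h2'
    have hmr : 0 < mu * r * (lam * K - mu) := by positivity
    rw [lt_div_iff₀ hmr] at h7
    have hheq : h ^ 2 * (α * Real.Gamma α) ^ 2 = (s ^ α) ^ 2 := by
      rw [hh]; field_simp
    calc h ^ 2 * (mu * r * (lam * K - mu))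
        = (s ^ α) ^ 2 * (mu * r * (lam * K - mu)) / (α * Real.Gamma α) ^ 2 := by
          rw [← hheq]; field_simp
      _ < lam * K := by
          rw [div_lt_iff₀ (by positivity)]; linarith [h7]
  -- abbreviate the matrix entries
  set p : ℝ := h * r * mu / (lam * K) with hp
  set q : ℝ := h * mu * (r + lam * K) / (lam * K) with hq
  set u : ℝ := h * r * (lam * K - mu) / (lam * K + r) with hu
  set c : ℝ := 1 + h * (d₁ - d) with hc
  set A : ℝ := p - 1 with hA
  set B : ℝ := h ^ 2 * (r * mu * (lam * K - mu)) / (lam * K) with hB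
  clear_value p q u c A B
  have hB0 : 0 < B := by rw [hB]; positivity
  have hB1 : B < 1 := by
    rw [hB, div_lt_one hlK]; nlinarith [key3]
  have hppos : 0 < p := by rw [hp]; positivity
  have hA1 : p < 1 := by
    rw [hp, div_lt_one hlK]
    nlinarith [key1, key3, mul_pos (mul_pos hhpos hr) hmu]
  have h1 : 0 < 1 + A + B := by rw [hA]; linarith
  have h2 : 0 < 1 - A + B := by rw [hA]; linarith
  have hqu : q * u = B := by
    rw [hq, hu, hB]
    have h1' : lam * K ≠ 0 := ne_of_gt hlK
    have h2' : lam * K + r ≠ 0 := by positivity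
    field_simp
    ring
  intro ξ hroot
  have he := hroot
  rw [Polynomial.IsRoot, eval_charpoly3, hM] at he
  simp [Matrix.map_apply, Matrix.vecHead, Matrix.vecTail] at he
  push_cast at he
  have hquC : (q : ℂ) * (u : ℂ) = (B : ℂ) := by exact_mod_cast congrArg Complex.ofReal hqu
  have heq : (ξ - (c : ℂ)) * (ξ ^ 2 + (A : ℂ) * ξ + (B : ℂ)) = 0 := by
    rw [hA]
    push_cast
    linear_combination he - (ξ - (c : ℂ)) * hquC
  clear he hroot
  rcases mul_eq_zero.mp heq with hcase | hcase
  · have hξc : ξ = (c : ℂ) := sub_eq_zero.mp hcase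
    rw [hξc, Complex.norm_real, Real.norm_eq_abs, abs_lt]
    constructor
    · rw [hc]; nlinarith [key2]
    · rw [hc]; nlinarith [hddpos]
  · exact quad_root_abs_lt_one A B hB0 hB1 h1 h2 ξ hcase
end
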